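/- Let G be a finite connected planar graph with dual G*, q ≥ 1, p ∈ (0,1), and let P^{G,p}(κ) ∝ p^{h(κ)}(1−p)^{s(κ)}/sqrt(Σ_{t∈ST(G)} q^{h(κ,t)}). If κ is distributed according to P^{G,p}, then the dual configuration κ* (with κ*_{e*} = 1+q−κ_e) is distributed according to P^{G*,p*} where p*/(1−p*) = (1−p)√q/p. -/

import Mathlib

open scoped Classical

/-- Number of edges of `E` on which the configuration takes the value `q`
(encoded as `true`). -/
noncomputable def hcount {E : Type*} [Fintype E] (σ : E → Bool) : ℕ :=
  (Finset.univ.filter (fun e => σ e = true)).card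

/-- Number of edges on which the configuration takes the value `1`. -/
noncomputable def scount {E : Type*} [Fintype E] (σ : E → Bool) : ℕ :=
  (Finset.univ.filter (fun e => σ e = false)).card

/-- Number of `q`-edges of the configuration inside a set `t` of edges. -/
noncomputable def hcountIn {E : Type*} (t : Finset E) (σ : E → Bool) : ℕ :=
  (t.filter (fun e => σ e = true)).card

/-- Unnormalised weight `p^{h(κ)} (1−p)^{s(κ)} / √(∑_{t ∈ ST} q^{h(κ,t)})`. -/
noncomputable def rcWeight {E : Type*} [Fintype E]
    (ST : Finset (Finset E)) (p q : ℝ) (σ : E → Bool) : ℝ :=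
  p ^ hcount σ * (1 - p) ^ scount σ /
    Real.sqrt (∑ t ∈ ST, q ^ hcountIn t σ)

/-- Probability of a configuration under `P^{G,p}`. -/
noncomputable def rcProb {E : Type*} [Fintype E]
    (ST : Finset (Finset E)) (p q : ℝ) (σ : E → Bool) : ℝ :=
  rcWeight ST p q σ / ∑ τ : E → Bool, rcWeight ST p q τ

/-- Auxiliary: if a bijection on configurations rescales all weights by a fixed
nonzero constant, it preserves the probabilities. -/
lemma rcProb_eq_of_weight_eq {E F : Type*} [Fintype E] [Fintype F]
    (ST : Finset (Finset E)) (ST' : Finset (Finset F)) (p q p' q' : ℝ)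
    (e : (E → Bool) → (F → Bool)) (he : Function.Bijective e)
    (c : ℝ) (hc : c ≠ 0)
    (key : ∀ τ, rcWeight ST' p' q' (e τ) = c * rcWeight ST p q τ)
    (σ : E → Bool) : rcProb ST' p' q' (e σ) = rcProb ST p q σ := by
  unfold rcProb
  rw [key σ]
  have hsum : (∑ τ' : F → Bool, rcWeight ST' p' q' τ')
      = c * ∑ τ : E → Bool, rcWeight ST p q τ := by
    rw [Finset.mul_sum]
    exact (Fintype.sum_bijective _ he _ _ (fun τ => (key τ).symm)).symm
  rw [hsum, mul_div_mul_left _ _ hc]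

set_option maxHeartbeats 1000000 in
/-- duality of the random conductance model on a planar graph.
If `κ` is distributed according to `P^{G,p}`, then the dual configuration `κ*`
(with `κ*_{e*} = 1+q−κ_e`, i.e. the Boolean encoding is flipped along the edge
duality `d`) is distributed according to `P^{G*,p*}` where
`p*/(1−p*) = (1−p)√q/p`, i.e. `p* = (1−p)√q/(p + (1−p)√q)`.  Spanning trees of
the dual graph are the duals `t^d = (E∖t)*` of the spanning trees of `G`, all
spanning trees having `m` edges. -/
theorem randomConductance_duality {E Estar : Type*} [Fintype E] [DecidableEq E]
    [Fintype Estar] [DecidableEq Estar]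
    (d : E ≃ Estar) (q p : ℝ) (hq : 1 ≤ q) (hp : p ∈ Set.Ioo (0 : ℝ) 1)
    (ST : Finset (Finset E)) (hST : ST.Nonempty)
    (m : ℕ) (hm : ∀ t ∈ ST, t.card = m)
    (σ : E → Bool) :
    rcProb (ST.image (fun t => tᶜ.image d))
        ((1 - p) * Real.sqrt q / (p + (1 - p) * Real.sqrt q)) q
        (fun e' => ! σ (d.symm e')) =
      rcProb ST p q σ := by
  classical
  obtain ⟨hp0, hp1⟩ := hp
  have hp1' : (0:ℝ) < 1 - p := by linarith
  have hq0 : (0:ℝ) < q := lt_of_lt_of_le one_pos hq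
  set sq := Real.sqrt q with hsqdef
  have hsq0 : 0 < sq := Real.sqrt_pos.mpr hq0
  have hsqsq : sq ^ 2 = q := Real.sq_sqrt hq0.le
  have hD : 0 < p + (1 - p) * sq := add_pos hp0 (mul_pos hp1' hsq0)
  set D := p + (1 - p) * sq with hDdef
  set pstar := (1 - p) * sq / D with hps
  have hpd : 1 - pstar = p / D := by
    rw [hps]; field_simp; ring
  set n := Fintype.card E with hn
  set c := sq ^ m / D ^ n with hc
  have hc0 : c ≠ 0 := by
    rw [hc]
    exact div_ne_zero (pow_ne_zero _ hsq0.ne') (pow_ne_zero _ hD.ne')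
  have hpow : ∀ k : ℕ, Real.sqrt (q ^ k) = sq ^ k := by
    intro k
    rw [← hsqsq, ← pow_mul, mul_comm 2 k, pow_mul, Real.sqrt_sq (by positivity)]
  have hinj : Function.Injective (fun t : Finset E => tᶜ.image d) := by
    intro t₁ t₂ h
    have := Finset.image_injective d.injective h
    simpa using congrArg compl this
  have key : ∀ τ : E → Bool,
      rcWeight (ST.image fun t => tᶜ.image d) pstar q (fun e' => !τ (d.symm e')) =
        c * rcWeight ST p q τ := by
    intro τ
    have hb : hcount (fun e' => !τ (d.symm e')) = scount τ := by
      unfold hcount scount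
      refine (Finset.card_equiv d ?_).symm
      intro e
      simp
    have hh : scount (fun e' => !τ (d.symm e')) = hcount τ := by
      unfold hcount scount
      refine (Finset.card_equiv d ?_).symm
      intro e
      simp
    have hbh : scount τ + hcount τ = n := by
      unfold hcount scount
      rw [hn]
      have h := Finset.card_filter_add_card_filter_not
        (s := (Finset.univ : Finset E)) (p := fun e => τ e = false)
      simp only [Bool.not_eq_false] at h
      rw [← Finset.card_univ, ← h]
    set S := ∑ t ∈ ST, q ^ hcountIn t τ with hS
    have hSpos : 0 < S := Finset.sum_pos (fun t _ => pow_pos hq0 _) hST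
    have hsqrtS : 0 < Real.sqrt S := Real.sqrt_pos.mpr hSpos
    have hSstar :
        (∑ t' ∈ ST.image (fun t => tᶜ.image d),
            q ^ hcountIn t' (fun e' => !τ (d.symm e')))
          = q ^ scount τ * S / q ^ m := by
      rw [Finset.sum_image (fun t₁ _ t₂ _ h => hinj h), eq_div_iff (pow_ne_zero _ hq0.ne'),
        Finset.sum_mul, hS, Finset.mul_sum]
      refine Finset.sum_congr rfl ?_
      intro t ht
      rw [← pow_add, ← pow_add]
      congr 1
      have h1 : hcountIn (tᶜ.image d) (fun e' => !τ (d.symm e'))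
          = (tᶜ.filter fun e => τ e = false).card := by
        unfold hcountIn
        refine (Finset.card_equiv d ?_).symm
        intro e
        constructor
        · intro he
          simp only [Finset.mem_filter] at he ⊢
          refine ⟨Finset.mem_image_of_mem d he.1, by simp [he.2]⟩
        · intro he
          simp only [Finset.mem_filter, Finset.mem_image] at he
          obtain ⟨⟨a, ha, hae⟩, he2⟩ := he
          have : a = e := d.injective hae
          subst this
          simp only [Equiv.symm_apply_apply, Bool.not_eq_true'] at he2
          exact Finset.mem_filter.mpr ⟨ha, he2⟩
      have h2 : (t.filter fun e => τ e = false).card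
            + (tᶜ.filter fun e => τ e = false).card = scount τ := by
        unfold scount
        rw [← Finset.card_union_of_disjoint
          (Finset.disjoint_filter_filter disjoint_compl_right),
          ← Finset.filter_union, Finset.union_compl]
      have h3 : (t.filter fun e => τ e = false).card + hcountIn t τ = m := by
        unfold hcountIn
        rw [← hm t ht]
        have h := Finset.card_filter_add_card_filter_not
          (s := t) (p := fun e => τ e = false)
        simp only [Bool.not_eq_false] at h
        rw [← h]
      rw [h1]
      omega
    unfold rcWeight
    rw [hb, hh, hSstar]
    rw [Real.sqrt_div (by positivity), Real.sqrt_mul (by positivity), hpow, hpow,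
      ← hS, hpd, hps, hc, ← hbh]
    rw [div_pow, div_pow, mul_pow, pow_add]
    field_simp
  have hbij : Function.Bijective (fun (τ : E → Bool) => fun e' => !τ (d.symm e')) := by
    constructor
    · intro a b hab
      funext e
      have := congrFun hab (d e)
      simpa using this
    · intro τ'
      refine ⟨fun e => !τ' (d e), ?_⟩
      funext e'
      simp
  exact rcProb_eq_of_weight_eq ST (ST.image fun t => tᶜ.image d) p q pstar q
    (fun τ => fun e' => !τ (d.symm e')) hbij c hc0 key σ
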